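/- Let x : ℕ → ℂ be a sequence and a ∈ ℂ with |a| = 1. Let D_a be the difference operator on sequences defined by (D_a x)_0 = x_0 and (D_a x)_n = x_n − a·x_{n−1} for n ≥ 1. Let m ≥ 1 be an integer such that the sequence D_a^m x is bounded. Then there exists C > 0 such that |x_n| ≤ C·n^m for every integer n ≥ 1. -/

import Mathlib

/-- The difference operator on sequences: `(Da a x) 0 = x 0` and
`(Da a x) n = x n - a * x (n-1)` for `n ≥ 1`. -/
def Da (a : ℂ) (x : ℕ → ℂ) : ℕ → ℂ
  | 0 => x 0
  | n + 1 => x (n + 1) - a * x n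

/-- A sequence of complex numbers is bounded. -/
def BoundedSeq (y : ℕ → ℂ) : Prop := ∃ M : ℝ, 0 < M ∧ ∀ n, ‖y n‖ ≤ M

lemma da_sum_bound (a : ℂ) (ha : ‖a‖ = 1) (x : ℕ → ℂ) :
    ∀ n, ‖x n‖ ≤ ∑ i ∈ Finset.range (n + 1), ‖Da a x i‖ := by
  intro n
  induction n with
  | zero => simp [Da]
  | succ n ih =>
    have hx : x (n + 1) = a * x n + Da a x (n + 1) := by simp [Da]
    rw [Finset.sum_range_succ]
    calc ‖x (n + 1)‖ ≤ ‖a * x n‖ + ‖Da a x (n + 1)‖ := by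
          rw [hx]; exact norm_add_le _ _
      _ = ‖x n‖ + ‖Da a x (n + 1)‖ := by rw [norm_mul, ha, one_mul]
      _ ≤ _ := by gcongr

lemma da_iter_bound (a : ℂ) (ha : ‖a‖ = 1) :
    ∀ (m : ℕ) (x : ℕ → ℂ) (M : ℝ),
      (∀ n, ‖(Da a)^[m] x n‖ ≤ M) →
      ∀ n, ‖x n‖ ≤ M * ((n : ℝ) + 1) ^ m := by
  intro m
  induction m with
  | zero => intro x M hM n; simpa using hM n
  | succ m ih =>
    intro x M hM n
    have hM0 : 0 ≤ M := le_trans (norm_nonneg _) (hM 0)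
    have hy : ∀ k, ‖Da a x k‖ ≤ M * ((k : ℝ) + 1) ^ m := by
      intro k
      exact ih (Da a x) M (fun j => by
        simpa [Function.iterate_succ_apply] using hM j) k
    calc ‖x n‖ ≤ ∑ i ∈ Finset.range (n + 1), ‖Da a x i‖ :=
          da_sum_bound a ha x n
      _ ≤ ∑ i ∈ Finset.range (n + 1), M * ((n : ℝ) + 1) ^ m := by
          apply Finset.sum_le_sum
          intro i hi
          refine le_trans (hy i) ?_
          have h2 : (i : ℝ) ≤ (n : ℝ) := by
            exact_mod_cast Nat.lt_succ_iff.mp (Finset.mem_range.mp hi)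
          gcongr <;> linarith [Nat.cast_nonneg (α := ℝ) i]
      _ = ((n : ℝ) + 1) * (M * ((n : ℝ) + 1) ^ m) := by
          rw [Finset.sum_const, Finset.card_range]; push_cast; ring
      _ = M * ((n : ℝ) + 1) ^ (m + 1) := by ring

theorem stmt1 (x : ℕ → ℂ) (a : ℂ) (ha : ‖a‖ = 1) (m : ℕ) (hm : 1 ≤ m)
    (hb : BoundedSeq ((Da a)^[m] x)) :
    ∃ C : ℝ, 0 < C ∧ ∀ n : ℕ, 1 ≤ n → ‖x n‖ ≤ C * (n : ℝ) ^ m := by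
  obtain ⟨M, hM0, hM⟩ := hb
  refine ⟨M * 2 ^ m, by positivity, fun n hn => ?_⟩
  have h := da_iter_bound a ha m x M hM n
  refine le_trans h ?_
  have hn' : (1 : ℝ) ≤ (n : ℝ) := by exact_mod_cast hn
  have h1 : ((n : ℝ) + 1) ^ m ≤ (2 * n) ^ m := by
    gcongr <;> linarith
  calc M * ((n : ℝ) + 1) ^ m ≤ M * (2 * n) ^ m := by gcongr
    _ = M * 2 ^ m * (n : ℝ) ^ m := by rw [mul_pow]; ring
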